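/- Let (X,d) be a quasi-metric space whose forward topology τ(d) equals τ(d̄), and suppose (X,d) is UC (with τ(d) T₁ and normal). Then for every closed subset A ⊆ X and every uniformly continuous, nowhere-zero function f:(A,d)→(ℝ,|·|), the reciprocal 1/f:(A,d)→(ℝ,|·|) is uniformly continuous. -/
import Mathlib


open Filter Topology Set

structure IsQuasiMetric {X : Type*} (d : X → X → ℝ) : Prop where
  nonneg : ∀ x y, 0 ≤ d x y
  refl : ∀ x, d x x = 0
  eq_of_both_zero : ∀ x y, d x y = 0 → d y x = 0 → x = y
  triangle : ∀ x y z, d x y ≤ d x z + d z y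

/-- The forward topology generated by forward balls `B⁺(x,ε) = {y | d x y < ε}`. -/
def forwardTopology {X : Type*} (d : X → X → ℝ) : TopologicalSpace X :=
  TopologicalSpace.generateFrom {S | ∃ x : X, ∃ ε : ℝ, 0 < ε ∧ S = {y | d x y < ε}}

/-- `s` forward converges to `x`: `d x (s n) → 0`. -/
def ForwardConv {X : Type*} (d : X → X → ℝ) (s : ℕ → X) (x : X) : Prop :=
  ∀ ε > (0:ℝ), ∃ N : ℕ, ∀ n ≥ N, d x (s n) < ε

/-- `s` backward converges to `x`: `d (s n) x → 0`. -/
def BackwardConv {X : Type*} (d : X → X → ℝ) (s : ℕ → X) (x : X) : Prop :=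
  ∀ ε > (0:ℝ), ∃ N : ℕ, ∀ n ≥ N, d (s n) x < ε

/-- `x` is a cluster point of `s`: some subsequence forward converges to `x`. -/
def IsClusterPointOf {X : Type*} (d : X → X → ℝ) (s : ℕ → X) (x : X) : Prop :=
  ∃ φ : ℕ → ℕ, StrictMono φ ∧ ForwardConv d (s ∘ φ) x

def LeftKCauchy {X : Type*} (d : X → X → ℝ) (s : ℕ → X) : Prop :=
  ∀ ε > (0:ℝ), ∃ n₀ : ℕ, ∀ k n : ℕ, n₀ ≤ k → k ≤ n → d (s k) (s n) < ε

/-- `s` is forward parallel to `t`. -/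
def ForwardParallel {X : Type*} (d : X → X → ℝ) (s t : ℕ → X) : Prop :=
  ∀ ε > (0:ℝ), ∃ N : ℕ, ∀ n ≥ N, d (s n) (t n) < ε

/-- Forward continuity for real-valued functions (ε-δ form). -/
def ForwardContinuous {X : Type*} (d : X → X → ℝ) (f : X → ℝ) : Prop :=
  ∀ x₀ : X, ∀ ε > (0:ℝ), ∃ δ > (0:ℝ), ∀ y, d x₀ y < δ → |f x₀ - f y| < ε

/-- Uniform continuity for real-valued functions. -/
def UniformlyCont {X : Type*} (d : X → X → ℝ) (f : X → ℝ) : Prop :=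
  ∀ ε > (0:ℝ), ∃ δ > (0:ℝ), ∀ x y, d x y < δ → |f x - f y| < ε

/-- `(X,d)` is a UC quasi-metric space. -/
def IsUC {X : Type*} (d : X → X → ℝ) : Prop :=
  ∀ f : X → ℝ, ForwardContinuous d f → UniformlyCont d f

/-- Distance between two sets: `inf {d a b | a ∈ A, b ∈ B}`. -/
noncomputable def setDist {X : Type*} (d : X → X → ℝ) (A B : Set X) : ℝ :=
  sInf {r : ℝ | ∃ a ∈ A, ∃ b ∈ B, d a b = r}

lemma isOpen_fball {X : Type*} (d : X → X → ℝ) (x : X) {ε : ℝ} (hε : 0 < ε) :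
    IsOpen[forwardTopology d] {y | d x y < ε} :=
  TopologicalSpace.isOpen_generateFrom_of_mem ⟨x, ε, hε, rfl⟩

lemma exists_ball_subset {X : Type*} {d : X → X → ℝ} (hd : IsQuasiMetric d)
    {S : Set X} (hS : IsOpen[forwardTopology d] S) :
    ∀ x ∈ S, ∃ ε > (0:ℝ), ∀ y, d x y < ε → y ∈ S := by
  have h : TopologicalSpace.GenerateOpen {S | ∃ x : X, ∃ ε : ℝ, 0 < ε ∧ S = {y | d x y < ε}} S := hS
  clear hS
  induction h with
  | basic s hs =>
    obtain ⟨z, ε, hε, rfl⟩ := hs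
    intro x hx
    refine ⟨ε - d z x, by simpa using hx, fun y hy => ?_⟩
    have := hd.triangle z y x
    simp only [Set.mem_setOf_eq] at *
    linarith
  | univ => exact fun x _ => ⟨1, one_pos, fun _ _ => trivial⟩
  | inter s t hgs hgt ihs iht =>
    intro x hx
    obtain ⟨ε₁, hε₁, h₁⟩ := ihs x hx.1
    obtain ⟨ε₂, hε₂, h₂⟩ := iht x hx.2
    exact ⟨min ε₁ ε₂, lt_min hε₁ hε₂, fun y hy =>
      ⟨h₁ y (hy.trans_le (min_le_left _ _)), h₂ y (hy.trans_le (min_le_right _ _))⟩⟩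
  | sUnion S hgS ih =>
    intro x hx
    obtain ⟨s, hsS, hxs⟩ := hx
    obtain ⟨ε, hε, h⟩ := ih s hsS x hxs
    exact ⟨ε, hε, fun y hy => ⟨s, hsS, h y hy⟩⟩

lemma closure_char {X : Type*} {d : X → X → ℝ} (hd : IsQuasiMetric d)
    {S : Set X} {p : X} (hp : p ∈ @closure X (forwardTopology d) S) :
    ∀ ε > (0:ℝ), ∃ q ∈ S, d p q < ε := by
  letI := forwardTopology d
  intro ε hε
  obtain ⟨q, hq1, hq2⟩ := (mem_closure_iff.mp hp) _ (isOpen_fball d p hε)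
    (by simp [hd.refl p, hε])
  exact ⟨q, hq2, hq1⟩

lemma eq_of_d_zero {X : Type*} {d : X → X → ℝ} (hd : IsQuasiMetric d)
    (hT1 : @T1Space X (forwardTopology d)) {p q : X} (h : d p q = 0) : p = q := by
  letI := forwardTopology d
  have hp : p ∈ closure ({q} : Set X) := by
    rw [mem_closure_iff]
    intro o ho hpo
    obtain ⟨ε, hε, hb⟩ := exists_ball_subset hd ho p hpo
    exact ⟨q, hb q (by rw [h]; exact hε), rfl⟩
  rwa [closure_singleton, Set.mem_singleton_iff] at hp

lemma closed_range_of_small {X : Type*} {d : X → X → ℝ} (hd : IsQuasiMetric d)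
    (hT1 : @T1Space X (forwardTopology d))
    {A : Set X} (hAc : @IsClosed X (forwardTopology d) A)
    {f : X → ℝ}
    (hf : ∀ ε > (0:ℝ), ∃ δ > (0:ℝ), ∀ x ∈ A, ∀ y ∈ A, d x y < δ → |f x - f y| < ε)
    (hnz : ∀ x ∈ A, f x ≠ 0)
    (s : ℕ → X) (hsA : ∀ n, s n ∈ A)
    (hsmall : ∀ c > (0:ℝ), ∃ N, ∀ n ≥ N, |f (s n)| < c) :
    @IsClosed X (forwardTopology d) (Set.range s) := by
  letI := forwardTopology d
  refine isClosed_of_closure_subset ?_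
  intro p hp
  by_contra hpr
  have hclose : ∀ ε > (0:ℝ), ∃ n, d p (s n) < ε := by
    intro ε hε
    obtain ⟨q, hq, hlt⟩ := closure_char hd hp ε hε
    obtain ⟨n, rfl⟩ := hq
    exact ⟨n, hlt⟩
  have hpos : ∀ n, 0 < d p (s n) := by
    intro n
    rcases lt_or_eq_of_le (hd.nonneg p (s n)) with h | h
    · exact h
    · exact absurd ⟨n, (eq_of_d_zero hd hT1 h.symm).symm⟩ hpr
  have hescape : ∀ N, ∀ δ > (0:ℝ), ∃ n ≥ N, d p (s n) < δ := by
    intro N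
    induction N with
    | zero => intro δ hδ; obtain ⟨n, hn⟩ := hclose δ hδ; exact ⟨n, Nat.zero_le _, hn⟩
    | succ N ih =>
      intro δ hδ
      obtain ⟨n, hnN, hn⟩ := ih (min δ (d p (s N))) (lt_min hδ (hpos N))
      refine ⟨n, ?_, hn.trans_le (min_le_left _ _)⟩
      rcases Nat.lt_or_ge n (N+1) with h | h
      · exfalso
        have : n = N := le_antisymm (Nat.lt_succ_iff.mp h) hnN
        subst this
        exact absurd (hn.trans_le (min_le_right _ _)) (lt_irrefl _)
      · exact h
  have hpA : p ∈ A := by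
    have h1 : Set.range s ⊆ A := by rintro q ⟨n, rfl⟩; exact hsA n
    have := closure_mono h1 hp
    rwa [hAc.closure_eq] at this
  have hfp : (0:ℝ) < |f p| := abs_pos.mpr (hnz p hpA)
  obtain ⟨δ, hδ, hδf⟩ := hf (|f p|/2) (by linarith)
  obtain ⟨N, hN⟩ := hsmall (|f p|/2) (by linarith)
  obtain ⟨n, hnN, hn⟩ := hescape N δ hδ
  have h1 : |f p - f (s n)| < |f p|/2 := hδf p hpA (s n) (hsA n) hn
  have h2 : |f (s n)| < |f p|/2 := hN n hnN
  have h3 : |f p| - |f (s n)| ≤ |f p - f (s n)| := abs_sub_abs_le_abs_sub _ _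
  linarith

lemma small_of_prod {ε c P Q D : ℝ} (hε : 0 < ε) (hc : 0 < c) (hP : 0 ≤ P) (hQ : 0 ≤ Q)
    (h1 : ε * (P * Q) ≤ D) (h2 : D < c/2) (h3 : D < ε * (c/2)^2)
    (h4 : P - Q ≤ D) (h5 : Q - P ≤ D) : P < c ∧ Q < c := by
  have hAB : P * Q < (c/2)^2 := by
    have := lt_of_le_of_lt h1 h3
    exact (mul_lt_mul_iff_right₀ hε).mp this
  rcases le_total P Q with h | h
  · have hP2 : P * P ≤ P * Q := mul_le_mul_of_nonneg_left h hP
    have hPc : P < c/2 := by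
      by_contra hcon
      push_neg at hcon
      have : (c/2)*(c/2) ≤ P*P := mul_le_mul hcon hcon (by linarith) hP
      nlinarith
    exact ⟨by linarith, by linarith⟩
  · have hQ2 : Q * Q ≤ P * Q := mul_le_mul_of_nonneg_right h hQ
    have hQc : Q < c/2 := by
      by_contra hcon
      push_neg at hcon
      have : (c/2)*(c/2) ≤ Q*Q := mul_le_mul hcon hcon (by linarith) hQ
      nlinarith
    exact ⟨by linarith, by linarith⟩


/-- in a UC quasi-metric space with τ(d) = τ(d̄) (T₁ and normal), the reciprocal
of a nowhere-zero uniformly continuous function on a closed set is uniformly continuous. -/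
theorem reciprocal_uniformlyCont {X : Type*} (d : X → X → ℝ) (hd : IsQuasiMetric d)
    (htop : forwardTopology d = forwardTopology (fun x y => d y x))
    (hT1 : @T1Space X (forwardTopology d))
    (hN : @NormalSpace X (forwardTopology d))
    (hUC : IsUC d)
    (A : Set X) (hAc : @IsClosed X (forwardTopology d) A)
    (f : X → ℝ)
    (hf : ∀ ε > (0:ℝ), ∃ δ > (0:ℝ), ∀ x ∈ A, ∀ y ∈ A, d x y < δ → |f x - f y| < ε)
    (hnz : ∀ x ∈ A, f x ≠ 0) :
    ∀ ε > (0:ℝ), ∃ δ > (0:ℝ), ∀ x ∈ A, ∀ y ∈ A, d x y < δ →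
      |1 / f x - 1 / f y| < ε := by
  letI := forwardTopology d
  by_contra hcon
  push_neg at hcon
  obtain ⟨ε, hε, hbad⟩ := hcon
  have hseq : ∀ n : ℕ, ∃ x, x ∈ A ∧ ∃ y, y ∈ A ∧
      d x y < 1/((n:ℝ)+1) ∧ ε ≤ |1 / f x - 1 / f y| := by
    intro n
    obtain ⟨x, hx, y, hy, h1, h2⟩ := hbad (1/((n:ℝ)+1)) (by positivity)
    exact ⟨x, hx, y, hy, h1, h2⟩
  choose xs hxsA ys hysA hdxy hsep using hseq
  have hane : ∀ n, f (xs n) ≠ 0 := fun n => hnz _ (hxsA n)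
  have hbne : ∀ n, f (ys n) ≠ 0 := fun n => hnz _ (hysA n)
  -- product bound
  have hprod : ∀ n, ε * (|f (xs n)| * |f (ys n)|) ≤ |f (xs n) - f (ys n)| := by
    intro n
    have ha := hane n; have hb := hbne n
    have h0 : 0 < |f (xs n)| * |f (ys n)| := mul_pos (abs_pos.mpr ha) (abs_pos.mpr hb)
    have heq : |1 / f (xs n) - 1 / f (ys n)|
        = |f (xs n) - f (ys n)| / (|f (xs n)| * |f (ys n)|) := by
      have h1 : 1 / f (xs n) - 1 / f (ys n)
          = (f (ys n) - f (xs n)) / (f (xs n) * f (ys n)) := by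
        field_simp
      rw [h1, abs_div, abs_mul, abs_sub_comm]
    have := hsep n
    rw [heq, le_div_iff₀ h0] at this
    linarith [this]
  -- differences go to zero
  have hdiff : ∀ c > (0:ℝ), ∃ N, ∀ n ≥ N, |f (xs n) - f (ys n)| < c := by
    intro c hc
    obtain ⟨δ, hδ, hδf⟩ := hf c hc
    obtain ⟨N, hNδ⟩ := exists_nat_gt (1/δ)
    refine ⟨N, fun n hn => hδf _ (hxsA n) _ (hysA n) ?_⟩
    have h1 : 1/((n:ℝ)+1) ≤ 1/((N:ℝ)+1) := by
      apply one_div_le_one_div_of_le (by positivity)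
      have : (N:ℝ) ≤ n := by exact_mod_cast hn
      linarith
    have h2 : 1/((N:ℝ)+1) < δ := by
      rw [div_lt_iff₀ (by positivity)]
      have h3 : (1:ℝ) = δ * (1/δ) := (mul_one_div_cancel hδ.ne').symm
      nlinarith [hNδ, hδ]
    exact lt_of_lt_of_le (hdxy n) (le_of_lt (lt_of_le_of_lt h1 h2))
  -- both values go to zero
  have hmax : ∀ c > (0:ℝ), ∃ N, ∀ n ≥ N, |f (xs n)| < c ∧ |f (ys n)| < c := by
    intro c hc
    obtain ⟨N, hN2⟩ := hdiff (min (c/2) (ε * (c/2)^2)) (by positivity)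
    refine ⟨N, fun n hn => ?_⟩
    have hD := hN2 n hn
    have h4 := abs_sub_abs_le_abs_sub (f (xs n)) (f (ys n))
    have h5 := abs_sub_abs_le_abs_sub (f (ys n)) (f (xs n))
    rw [abs_sub_comm] at h5
    exact small_of_prod hε hc (abs_nonneg _) (abs_nonneg _) (hprod n)
      (lt_of_lt_of_le hD (min_le_left _ _)) (lt_of_lt_of_le hD (min_le_right _ _)) h4 h5
  -- thinning
  set m : ℕ → ℝ := fun j => min |f (xs j)| |f (ys j)| with hm_def
  have hm : ∀ j, 0 < m j := fun j => lt_min (abs_pos.mpr (hane j)) (abs_pos.mpr (hbne j))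
  have hstep : ∀ j, ∃ n, j < n ∧ |f (xs n)| < m j ∧ |f (ys n)| < m j := by
    intro j
    obtain ⟨N, hN2⟩ := hmax (m j) (hm j)
    exact ⟨max N (j+1), lt_of_lt_of_le (Nat.lt_succ_self j) (le_max_right _ _),
      (hN2 _ (le_max_left _ _)).1, (hN2 _ (le_max_left _ _)).2⟩
  choose step hstep1 hstep2 hstep3 using hstep
  set φ : ℕ → ℕ := fun k => step^[k] 0 with hφ_def
  have hφsucc : ∀ k, φ (k+1) = step (φ k) := fun k => Function.iterate_succ_apply' step k 0
  have hφmono : StrictMono φ := strictMono_nat_of_lt_succ (fun k => by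
    rw [hφsucc]; exact hstep1 _)
  have hmanti : ∀ k, m (φ (k+1)) < m (φ k) := by
    intro k
    calc m (φ (k+1)) ≤ |f (xs (φ (k+1)))| := min_le_left _ _
    _ < m (φ k) := by rw [hφsucc]; exact hstep2 _
  have hmanti' : Antitone (fun k => m (φ k)) :=
    antitone_nat_of_succ_le (fun j => (hmanti j).le)
  set U : Set X := Set.range (fun k => xs (φ k)) with hU_def
  set V : Set X := Set.range (fun k => ys (φ k)) with hV_def
  have hdisj : Disjoint U V := by
    rw [Set.disjoint_left]
    rintro p ⟨k, rfl⟩ ⟨l, hl⟩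
    simp only at hl
    rcases lt_trichotomy k l with h | h | h
    · obtain ⟨j, rfl⟩ : ∃ j, l = j+1 := ⟨l-1, by omega⟩
      have h1 : |f (ys (φ (j+1)))| < m (φ j) := by rw [hφsucc]; exact hstep3 _
      have h2 : m (φ j) ≤ m (φ k) := hmanti' (show k ≤ j by omega)
      have h3 : m (φ k) ≤ |f (xs (φ k))| := min_le_left _ _
      rw [hl] at h1
      linarith
    · subst h
      have := hsep (φ k)
      rw [hl] at this
      simp at this
      linarith
    · obtain ⟨j, rfl⟩ : ∃ j, k = j+1 := ⟨k-1, by omega⟩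
      have h1 : |f (xs (φ (j+1)))| < m (φ j) := by rw [hφsucc]; exact hstep2 _
      have h2 : m (φ j) ≤ m (φ l) := hmanti' (show l ≤ j by omega)
      have h3 : m (φ l) ≤ |f (ys (φ l))| := min_le_right _ _
      rw [hl] at h3
      linarith
  have hUclosed : IsClosed U := by
    apply closed_range_of_small hd hT1 hAc hf hnz (fun k => xs (φ k)) (fun k => hxsA _)
    intro c hc
    obtain ⟨N, hN2⟩ := hmax c hc
    exact ⟨N, fun n hn => (hN2 (φ n) (le_trans hn hφmono.le_apply)).1⟩
  have hVclosed : IsClosed V := by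
    apply closed_range_of_small hd hT1 hAc hf hnz (fun k => ys (φ k)) (fun k => hysA _)
    intro c hc
    obtain ⟨N, hN2⟩ := hmax c hc
    exact ⟨N, fun n hn => (hN2 (φ n) (le_trans hn hφmono.le_apply)).2⟩
  obtain ⟨g, hg0, hg1, _⟩ := exists_continuous_zero_one_of_isClosed hUclosed hVclosed hdisj
  have hgc : ForwardContinuous d (⇑g) := by
    intro x₀ ε' hε'
    have hO : IsOpen (⇑g ⁻¹' Metric.ball (g x₀) ε') := Metric.isOpen_ball.preimage g.continuous
    obtain ⟨δ, hδ, hb⟩ := exists_ball_subset hd hO x₀ (by simp [Metric.mem_ball, hε'])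
    refine ⟨δ, hδ, fun y hy => ?_⟩
    have := hb y hy
    simp only [Set.mem_preimage, Metric.mem_ball, Real.dist_eq] at this
    rwa [abs_sub_comm]
  obtain ⟨δ, hδ, hu⟩ := hUC (⇑g) hgc 1 one_pos
  obtain ⟨K, hK⟩ := exists_nat_gt (1/δ)
  have hdK : d (xs (φ K)) (ys (φ K)) < δ := by
    have h1 : 1/((φ K : ℝ)+1) ≤ 1/((K:ℝ)+1) := by
      apply one_div_le_one_div_of_le (by positivity)
      have : (K:ℝ) ≤ φ K := by exact_mod_cast hφmono.le_apply
      linarith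
    have h2 : 1/((K:ℝ)+1) < δ := by
      rw [div_lt_iff₀ (by positivity)]
      have h3 : (1:ℝ) = δ * (1/δ) := (mul_one_div_cancel hδ.ne').symm
      nlinarith [hK, hδ]
    exact lt_of_lt_of_le (hdxy (φ K)) (le_of_lt (lt_of_le_of_lt h1 h2))
  have := hu (xs (φ K)) (ys (φ K)) hdK
  have e0 : g (xs (φ K)) = 0 := hg0 ⟨K, rfl⟩
  have e1 : g (ys (φ K)) = 1 := hg1 ⟨K, rfl⟩
  rw [e0, e1] at this
  norm_num at this
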